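/- Let h : ℝ → ℝ be differentiable and α : ℝ → ℝ be Lipschitz continuous with α(0) = 0 and α strictly increasing. If h(0) > 0 and h'(t) ≥ -α(h(t)) for all t ≥ 0, then h(t) > 0 for all t ≥ 0. -/

import Mathlib

theorem cbf_forward_invariance_general (h : ℝ → ℝ) (hdiff : Differentiable ℝ h)
    (α : ℝ → ℝ) (L : NNReal) (hLip : LipschitzWith L α)
    (hα0 : α 0 = 0) (hmono : StrictMono α)
    (h0 : 0 < h 0)
    (hcbf : ∀ t : ℝ, 0 ≤ t → deriv h t ≥ -α (h t)) :
    ∀ t : ℝ, 0 ≤ t → 0 < h t := by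
  intro t ht
  by_contra hneg
  push_neg at hneg
  -- set of bad times in [0,t]
  set S : Set ℝ := {s | s ∈ Set.Icc (0:ℝ) t ∧ h s ≤ 0} with hS
  have hSne : S.Nonempty := ⟨t, ⟨ht, le_refl t⟩, hneg⟩
  have hSbdd : BddBelow S := ⟨0, fun s hs => hs.1.1⟩
  have hScl : IsClosed S := by
    have : S = (Set.Icc (0:ℝ) t) ∩ h ⁻¹' (Set.Iic 0) := by
      ext s; simp [hS, Set.mem_Icc, and_assoc]
    rw [this]
    exact isClosed_Icc.inter (isClosed_Iic.preimage hdiff.continuous)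
  set t₀ := sInf S with ht₀
  have ht₀S : t₀ ∈ S := hScl.csInf_mem hSne hSbdd
  have ht₀0 : 0 ≤ t₀ := ht₀S.1.1
  have hpos : ∀ s, 0 ≤ s → s < t₀ → 0 < h s := by
    intro s hs0 hst
    by_contra hc
    push_neg at hc
    have : t₀ ≤ s := csInf_le hSbdd ⟨⟨hs0, le_trans (le_of_lt hst) ht₀S.1.2⟩, hc⟩
    linarith
  -- consider g s = h s * exp (L s)
  set g : ℝ → ℝ := fun s => h s * Real.exp (L * s) with hg
  have hgdiff : Differentiable ℝ g := by
    exact hdiff.mul (Real.differentiable_exp.comp (differentiable_const _ |>.mul differentiable_id))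
  have hgderiv : ∀ s, deriv g s = deriv h s * Real.exp (L * s) + h s * (L * Real.exp (L * s)) := by
    intro s
    have h1 : HasDerivAt (fun s : ℝ => Real.exp ((L:ℝ) * s)) ((L:ℝ) * Real.exp ((L:ℝ) * s)) s := by
      have := ((hasDerivAt_id s).const_mul (L:ℝ)).exp
      simpa [mul_comm, mul_one] using this
    have h2 := (hdiff s).hasDerivAt.mul h1
    exact h2.deriv
  have hmonog : MonotoneOn g (Set.Icc 0 t₀) := by
    apply monotoneOn_of_deriv_nonneg (convex_Icc 0 t₀) hgdiff.continuous.continuousOn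
      (fun s _ => (hgdiff s).differentiableWithinAt)
    intro s hs
    rw [interior_Icc] at hs
    obtain ⟨hs0, hst⟩ := hs
    have hhs : 0 < h s := hpos s hs0.le hst
    have hαle : α (h s) ≤ L * h s := by
      have := hLip.dist_le_mul (h s) 0
      rw [Real.dist_eq, Real.dist_eq, hα0, sub_zero, sub_zero] at this
      calc α (h s) ≤ |α (h s)| := le_abs_self _
        _ ≤ L * |h s| := this
        _ = L * h s := by rw [abs_of_pos hhs]
    have hd := hcbf s hs0.le
    rw [hgderiv s]
    have hexp : 0 < Real.exp (L * s) := Real.exp_pos _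
    nlinarith [hd, hαle, hexp]
  have hle : g 0 ≤ g t₀ := hmonog ⟨le_refl 0, ht₀0⟩ ⟨ht₀0, le_refl t₀⟩ ht₀0
  have hg0 : 0 < g 0 := by simp [hg, h0]
  have hgt₀ : g t₀ ≤ 0 := mul_nonpos_of_nonpos_of_nonneg ht₀S.2 (Real.exp_pos _).le
  linarith
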